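/- Let σ∨ ⊂ M ⊗ ℝ be a full-dimensional strictly convex rational polyhedral cone of dimension n that is not simplicial, with primitive ray generators u₁,…,u_s. Let γ ⊆ σ∨ be a cone spanned by n linearly independent primitive generators u₁,…,u_n on which λ_max is linear. Then some facet of γ, say the one spanned by u₁,…,u_{n−1}, has relative interior contained in the topological interior of σ∨, and p = u₁ + ⋯ + u_{n−1} is a lattice point in the interior of σ∨ with λ_max(p) = n − 1. -/

import Mathlib

open Finset

noncomputable section

/-- The convex polyhedral cone generated by the vectors `u i`. -/
def coneOf {n : ℕ} {ι : Type*} [Fintype ι] (u : ι → (Fin n → ℝ)) : Set (Fin n → ℝ) :=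
  {x | ∃ a : ι → ℝ, (∀ i, 0 ≤ a i) ∧ x = ∑ i, a i • u i}

/-- The set of coefficient sums of nonnegative representations of `x` in terms of `u`. -/
def reprSums {n : ℕ} {ι : Type*} [Fintype ι] (u : ι → (Fin n → ℝ)) (x : Fin n → ℝ) :
    Set ℝ :=
  {t | ∃ a : ι → ℝ, (∀ i, 0 ≤ a i) ∧ x = ∑ i, a i • u i ∧ t = ∑ i, a i}

/-- `λ_min`: the minimal coefficient sum of a nonnegative representation. -/
noncomputable def lamMin {n : ℕ} {ι : Type*} [Fintype ι] (u : ι → (Fin n → ℝ))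
    (x : Fin n → ℝ) : ℝ :=
  sInf (reprSums u x)

/-- `λ_max`: the maximal coefficient sum of a nonnegative representation. -/
noncomputable def lamMax {n : ℕ} {ι : Type*} [Fintype ι] (u : ι → (Fin n → ℝ))
    (x : Fin n → ℝ) : ℝ :=
  sSup (reprSums u x)

/-- A lattice point: all coordinates are integers. -/
def IsLatticePt {n : ℕ} (x : Fin n → ℝ) : Prop := ∀ j, ∃ z : ℤ, x j = (z : ℝ)

/-- A primitive lattice vector: the smallest nonzero lattice point on its ray. -/
def IsPrimitive {n : ℕ} (x : Fin n → ℝ) : Prop :=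
  IsLatticePt x ∧ x ≠ 0 ∧ ∀ c : ℝ, 0 < c → IsLatticePt (c • x) → 1 ≤ c

/-- Strict convexity (pointedness) of the cone generated by `u`. -/
def PointedGens {n : ℕ} {ι : Type*} [Fintype ι] (u : ι → (Fin n → ℝ)) : Prop :=
  ∀ x, x ∈ coneOf u → -x ∈ coneOf u → x = 0

/-- Full-dimensionality of the cone generated by `u`. -/
def FullDim {n : ℕ} {ι : Type*} [Fintype ι] (u : ι → (Fin n → ℝ)) : Prop :=
  Submodule.span ℝ (Set.range u) = ⊤

/-- Each `u i` spans an extremal ray: it is not in the cone generated by the others. -/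
def ExtremalGens {n : ℕ} {ι : Type*} [Fintype ι] [DecidableEq ι]
    (u : ι → (Fin n → ℝ)) : Prop :=
  ∀ i, u i ∉ coneOf (fun j : {j : ι // j ≠ i} => u j.1)

/-- The standard pairing between `M ⊗ ℝ` and `N ⊗ ℝ`. -/
def pairing {n : ℕ} (x v : Fin n → ℝ) : ℝ := ∑ j, x j * v j


theorem coneOf_convex {n : ℕ} {ι : Type*} [Fintype ι] (u : ι → (Fin n → ℝ)) :
    Convex ℝ (coneOf u) := by
  rintro x ⟨a, ha, rfl⟩ y ⟨b, hb, rfl⟩ p q hp hq hpq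
  refine ⟨fun i => p * a i + q * b i,
    fun i => add_nonneg (mul_nonneg hp (ha i)) (mul_nonneg hq (hb i)), ?_⟩
  rw [Finset.smul_sum, Finset.smul_sum, ← Finset.sum_add_distrib]
  refine Finset.sum_congr rfl fun i _ => ?_
  rw [add_smul, smul_smul, smul_smul]

theorem coeff_eq_zero_of_sum_eq_zero {n s : ℕ} {u : Fin s → (Fin n → ℝ)}
    (hpt : PointedGens u) (hne : ∀ i, u i ≠ 0)
    {a : Fin s → ℝ} (ha : ∀ i, 0 ≤ a i) (h0 : ∑ i, a i • u i = 0) (k : Fin s) : a k = 0 := by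
  have h1 : a k • u k ∈ coneOf u := by
    refine ⟨fun i => if i = k then a k else 0, fun i => by dsimp only; split <;> simp [ha k], ?_⟩
    simp [ite_smul]
  have hsum : ∑ i, (if i = k then 0 else a i) • u i = -(a k • u k) := by
    have h : ∀ i, (if i = k then (0:ℝ) else a i) • u i
        = a i • u i - (if i = k then a i • u i else 0) := by
      intro i; split <;> simp
    rw [Finset.sum_congr rfl fun i _ => h i, Finset.sum_sub_distrib, h0,
      Finset.sum_ite_eq' Finset.univ k]
    simp
  have h2 : -(a k • u k) ∈ coneOf u :=
    ⟨fun i => if i = k then 0 else a i, fun i => by dsimp only; split <;> simp [ha i], hsum.symm⟩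
  have := hpt _ h1 h2
  rcases smul_eq_zero.1 this with h | h
  · exact h
  · exact absurd h (hne k)

theorem reprSums_le_one {n s : ℕ} {u : Fin s → (Fin n → ℝ)}
    (hpt : PointedGens u) (hne : ∀ i, u i ≠ 0) (hext : ExtremalGens u) (k : Fin s) :
    ∀ t ∈ reprSums u (u k), t ≤ 1 := by
  rintro t ⟨a, ha, hrep, rfl⟩
  rcases le_or_gt 1 (a k) with hk | hk
  · -- a k ≥ 1 : use pointedness
    have h0 : ∑ i, (if i = k then a k - 1 else a i) • u i = 0 := by
      have h : ∀ i, (if i = k then a k - 1 else a i) • u i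
          = a i • u i - (if i = k then u i else 0) := by
        intro i
        by_cases h' : i = k
        · subst h'; simp [sub_smul]
        · simp [h']
      rw [Finset.sum_congr rfl fun i _ => h i, Finset.sum_sub_distrib,
        Finset.sum_ite_eq' Finset.univ k]
      simp [← hrep]
    have hz := fun i => coeff_eq_zero_of_sum_eq_zero hpt hne
      (a := fun i => if i = k then a k - 1 else a i)
      (fun i => by split <;> [linarith; exact ha i]) h0 i
    have hak : a k = 1 := by have := hz k; simp at this; linarith
    have hothers : ∀ i, i ≠ k → a i = 0 := by
      intro i hi; have := hz i; simpa [hi] using this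
    have : ∀ i, a i = if i = k then 1 else 0 := by
      intro i; by_cases h : i = k
      · simp [h, hak]
      · simp [h, hothers i h]
    rw [Finset.sum_congr rfl fun i _ => this i, Finset.sum_ite_eq' Finset.univ k]
    simp
  · -- a k < 1 : contradict extremality
    exfalso
    apply hext k
    have hc : 0 < 1 - a k := by linarith
    set c := (1 - a k)⁻¹ with hcdef
    have hsum : (1 - a k) • u k = ∑ i ∈ Finset.univ.erase k, a i • u i := by
      have h1 : ∑ i, a i • u i = a k • u k + ∑ i ∈ Finset.univ.erase k, a i • u i :=
        (Finset.add_sum_erase _ _ (Finset.mem_univ k)).symm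
      rw [← hrep] at h1
      rw [sub_smul, one_smul, sub_eq_iff_eq_add, add_comm]
      exact h1
    refine ⟨fun jj => c * a jj.1, fun jj => mul_nonneg (inv_nonneg.2 hc.le) (ha _), ?_⟩
    have hst := Finset.sum_subtype (p := fun j => j ≠ k)
      (F := Subtype.fintype _) (Finset.univ.erase k)
      (by simp) (fun i => (c * a i) • u i)
    rw [← hst]
    have h2 : ∑ i ∈ Finset.univ.erase k, (c * a i) • u i = c • ((1 - a k) • u k) := by
      rw [hsum, Finset.smul_sum]
      exact Finset.sum_congr rfl fun i _ => (smul_smul c (a i) (u i)).symm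
    rw [h2, smul_smul, inv_mul_cancel₀ hc.ne', one_smul]

theorem lamMax_gen {n s : ℕ} {u : Fin s → (Fin n → ℝ)}
    (hpt : PointedGens u) (hne : ∀ i, u i ≠ 0) (hext : ExtremalGens u) (k : Fin s) :
    lamMax u (u k) = 1 := by
  have hmem : (1:ℝ) ∈ reprSums u (u k) := by
    refine ⟨fun i => if i = k then 1 else 0, fun i => by dsimp only; split <;> norm_num, ?_, ?_⟩
    · simp [ite_smul]
    · simp
  have hbd := reprSums_le_one hpt hne hext k
  exact le_antisymm (csSup_le ⟨1, hmem⟩ hbd) (le_csSup ⟨1, hbd⟩ hmem)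

theorem sum_if_erase {M : Type*} [AddCommMonoid M] {m : ℕ} (j : Fin m) (g : Fin m → M) :
    ∑ i, (if i = j then 0 else g i) = ∑ i ∈ Finset.univ.erase j, g i := by
  rw [← Finset.sum_erase Finset.univ (a := j) (f := fun i => if i = j then (0:M) else g i) (by simp)]
  exact Finset.sum_congr rfl fun i hi => if_neg (Finset.ne_of_mem_erase hi)

theorem facet_interior {n s : ℕ} {u : Fin s → (Fin n → ℝ)} {f : Fin n → Fin s}
    (hγ : coneOf (u ∘ f) ⊆ coneOf u) (j : Fin n) (c d : Fin n → ℝ)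
    (hc : ∀ i, i ≠ j → 0 ≤ c i) (hd : ∀ i, i ≠ j → 0 < d i)
    (hz : (∑ i ∈ Finset.univ.erase j, c i • u (f i)) ∈ interior (coneOf u)) :
    (∑ i ∈ Finset.univ.erase j, d i • u (f i)) ∈ interior (coneOf u) := by
  set S := ∑ i ∈ Finset.univ.erase j, c i / d i with hSdef
  have hS : 0 ≤ S := Finset.sum_nonneg fun i hi =>
    div_nonneg (hc i (Finset.ne_of_mem_erase hi)) (hd i (Finset.ne_of_mem_erase hi)).le
  have h1S : (0:ℝ) < 1 + S := by linarith
  set ε := (1 + S)⁻¹ with hεdef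
  have hε : 0 < ε := inv_pos.2 h1S
  have hεc : ∀ i, i ≠ j → ε * c i ≤ d i := by
    intro i hij
    have h1 : c i / d i ≤ S :=
      Finset.single_le_sum (f := fun i => c i / d i)
        (fun p hp => div_nonneg (hc p (Finset.ne_of_mem_erase hp)) (hd p (Finset.ne_of_mem_erase hp)).le)
        (Finset.mem_erase.2 ⟨hij, Finset.mem_univ i⟩)
    have h2 : c i ≤ d i * (1 + S) := by
      have := (div_le_iff₀ (hd i hij)).1 (h1.trans (by linarith : S ≤ 1 + S))
      linarith
    calc ε * c i ≤ ε * (d i * (1 + S)) := mul_le_mul_of_nonneg_left h2 hε.le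
    _ = d i := by rw [hεdef, mul_comm (d i), ← mul_assoc, inv_mul_cancel₀ h1S.ne', one_mul]
  have hwnn : ∀ i, i ≠ j → 0 ≤ (1 + ε) * d i - ε * c i := by
    intro i hij
    have h1 := hεc i hij
    have h2 : 0 ≤ ε * d i := mul_nonneg hε.le (hd i hij).le
    nlinarith [hd i hij]
  have hw : (∑ i ∈ Finset.univ.erase j, ((1 + ε) * d i - ε * c i) • u (f i)) ∈ coneOf u := by
    apply hγ
    refine ⟨fun i => if i = j then 0 else (1 + ε) * d i - ε * c i,
      fun i => by dsimp only; split <;> [exact le_refl 0; exact hwnn i (by assumption)], ?_⟩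
    have h2 : ∀ i, (if i = j then (0:ℝ) else (1 + ε) * d i - ε * c i) • (u ∘ f) i
        = (if i = j then 0 else ((1 + ε) * d i - ε * c i) • u (f i)) := by
      intro i; split <;> simp [Function.comp]
    calc ∑ i ∈ Finset.univ.erase j, ((1 + ε) * d i - ε * c i) • u (f i)
        = ∑ i, (if i = j then 0 else ((1 + ε) * d i - ε * c i) • u (f i)) :=
          (sum_if_erase j _).symm
      _ = ∑ i, (if i = j then (0:ℝ) else (1 + ε) * d i - ε * c i) • (u ∘ f) i :=
          Finset.sum_congr rfl fun i _ => (h2 i).symm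
  have key : (∑ i ∈ Finset.univ.erase j, d i • u (f i))
      = (ε / (1 + ε)) • (∑ i ∈ Finset.univ.erase j, c i • u (f i))
        + ((1 + ε)⁻¹) • (∑ i ∈ Finset.univ.erase j, ((1 + ε) * d i - ε * c i) • u (f i)) := by
    rw [Finset.smul_sum, Finset.smul_sum, ← Finset.sum_add_distrib]
    refine Finset.sum_congr rfl fun i hi => ?_
    rw [smul_smul, smul_smul, ← add_smul]
    congr 1
    have h1 : (1:ℝ) + ε ≠ 0 := by positivity
    field_simp
    ring
  rw [key]
  have h1ε : (0:ℝ) < 1 + ε := by linarith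
  exact Convex.combo_interior_closure_mem_interior (coneOf_convex u) hz (subset_closure hw)
    (div_pos hε h1ε) (inv_nonneg.2 h1ε.le) (by field_simp; ring)

theorem nonsimplicial_interior_facet {n s : ℕ} (u : Fin s → (Fin n → ℝ))
    (hpt : PointedGens u) (hfd : FullDim u)
    (hprim : ∀ i, IsPrimitive (u i)) (hext : ExtremalGens u)
    (hns : ∀ f : Fin n → Fin s, coneOf u ≠ coneOf (u ∘ f))
    (f : Fin n → Fin s) (hfli : LinearIndependent ℝ (u ∘ f))
    (hγ : coneOf (u ∘ f) ⊆ coneOf u)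
    (hlin : ∃ L : (Fin n → ℝ) →ₗ[ℝ] ℝ, ∀ x ∈ coneOf (u ∘ f), lamMax u x = L x) :
    ∃ j : Fin n,
      (∀ b : Fin n → ℝ, (∀ i, i ≠ j → 0 < b i) →
        (∑ i ∈ Finset.univ.erase j, b i • u (f i)) ∈ interior (coneOf u)) ∧
      IsLatticePt (∑ i ∈ Finset.univ.erase j, u (f i)) ∧
      (∑ i ∈ Finset.univ.erase j, u (f i)) ∈ interior (coneOf u) ∧
      lamMax u (∑ i ∈ Finset.univ.erase j, u (f i)) = (n : ℝ) - 1 := by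
  have hne : ∀ i, u i ≠ 0 := fun i => (hprim i).2.1
  rcases Nat.eq_zero_or_pos n with hn0 | hn
  · exfalso
    apply hns f
    subst hn0
    have hz : ∀ x y : Fin 0 → ℝ, x = y := fun x y => funext fun i => i.elim0
    have huniv : ∀ {ι : Type} [inst : Fintype ι] (v : ι → (Fin 0 → ℝ)),
        coneOf v = Set.univ := by
      intro ι inst v
      ext x
      simp only [Set.mem_univ, iff_true]
      exact ⟨fun _ => 0, fun _ => le_refl 0, hz _ _⟩
    rw [huniv u, huniv (u ∘ f)]
  haveI : Nonempty (Fin n) := ⟨⟨0, hn⟩⟩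
  obtain ⟨L, hL⟩ := hlin
  have hcard : Fintype.card (Fin n) = Module.finrank ℝ (Fin n → ℝ) := by
    simp [Module.finrank_fin_fun]
  set B := basisOfLinearIndependentOfCardEqFinrank hfli hcard with hBdef
  have hBcoe : ⇑B = u ∘ f := by
    rw [hBdef]; exact coe_basisOfLinearIndependentOfCardEqFinrank hfli hcard
  have hBi : ∀ i, B i = u (f i) := fun i => by rw [hBcoe]; rfl
  have hmemγ : ∀ x, x ∈ coneOf (u ∘ f) ↔ ∀ i, 0 ≤ B.repr x i := by
    intro x
    constructor
    · rintro ⟨a, ha, rfl⟩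
      have he : ∑ i, a i • (u ∘ f) i = ∑ i, a i • B i :=
        Finset.sum_congr rfl fun i _ => by rw [hBi]; rfl
      intro i
      rw [he, B.repr_sum_self]
      exact ha i
    · intro h
      refine ⟨fun i => B.repr x i, h, ?_⟩
      calc x = ∑ i, B.repr x i • B i := (B.sum_repr x).symm
        _ = ∑ i, B.repr x i • (u ∘ f) i := Finset.sum_congr rfl fun i _ => by rw [hBi]; rfl
  have hcont : ∀ i : Fin n, Continuous fun x : Fin n → ℝ => (B.repr x i : ℝ) := by
    intro i
    have he : (fun x : Fin n → ℝ => (B.repr x i : ℝ)) = ⇑(B.coord i) := by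
      funext x; rw [Module.Basis.coord_apply]
    rw [he]
    exact (B.coord i).continuous_of_finiteDimensional
  have hintγ : ∀ x : Fin n → ℝ, (∀ i, 0 < B.repr x i) → x ∈ interior (coneOf (u ∘ f)) := by
    intro x hx
    have hopen : IsOpen {y : Fin n → ℝ | ∀ i, 0 < B.repr y i} := by
      have he : {y : Fin n → ℝ | ∀ i, 0 < B.repr y i}
          = ⋂ i, (fun y : Fin n → ℝ => (B.repr y i : ℝ)) ⁻¹' Set.Ioi 0 := by
        ext y; simp [Set.mem_iInter]
      rw [he]
      exact isOpen_iInter_of_finite fun i => isOpen_Ioi.preimage (hcont i)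
    exact interior_maximal (fun y hy => (hmemγ y).2 fun i => (hy i).le) hopen hx
  have hγclosed : IsClosed (coneOf (u ∘ f)) := by
    have he : coneOf (u ∘ f) = ⋂ i, (fun y : Fin n → ℝ => (B.repr y i : ℝ)) ⁻¹' Set.Ici 0 := by
      ext y
      simp only [Set.mem_iInter, Set.mem_preimage, Set.mem_Ici]
      exact hmemγ y
    rw [he]
    exact isClosed_iInter fun i => isClosed_Ici.preimage (hcont i)
  have hqint : ∃ j : Fin n, (∑ i ∈ Finset.univ.erase j, u (f i)) ∈ interior (coneOf u) := by
    by_contra hq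
    push_neg at hq
    obtain ⟨x, hxσ, hxγ⟩ := Set.exists_of_ssubset (HasSubset.Subset.ssubset_of_ne hγ (hns f).symm)
    set y : Fin n → ℝ := ∑ i, u (f i) with hydef
    have hyint : y ∈ interior (coneOf (u ∘ f)) := by
      apply hintγ
      intro i
      have he : y = ∑ i, (1:ℝ) • B i := by
        rw [hydef]
        exact Finset.sum_congr rfl fun i _ => by rw [one_smul, hBi i]
      rw [he, B.repr_sum_self]
      norm_num
    set g : ℝ → (Fin n → ℝ) := fun t => y + t • (x - y) with hgdef
    have hgcont : Continuous g := continuous_const.add (continuous_id.smul continuous_const)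
    set T : Set ℝ := Set.Icc 0 1 ∩ g ⁻¹' coneOf (u ∘ f) with hTdef
    have hTc : IsCompact T := isCompact_Icc.inter_right (hγclosed.preimage hgcont)
    have hT0 : (0:ℝ) ∈ T := by
      refine ⟨⟨le_refl 0, zero_le_one⟩, show g 0 ∈ coneOf (u ∘ f) from ?_⟩
      have he : g 0 = y := by simp only [hgdef]; simp
      rw [he]
      exact interior_subset hyint
    set t0 := sSup T with ht0def
    have hmemT : t0 ∈ T := hTc.sSup_mem ⟨0, hT0⟩
    obtain ⟨⟨ht00, ht01⟩, hzγ⟩ := hmemT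
    have hg1 : g 1 = x := by simp only [hgdef]; simp
    have ht0lt : t0 < 1 := by
      rcases lt_or_eq_of_le ht01 with h | h
      · exact h
      · exact absurd (by rw [← hg1, ← h]; exact hzγ) hxγ
    have hznotint : g t0 ∉ interior (coneOf (u ∘ f)) := by
      intro hzint
      have hU : IsOpen (g ⁻¹' interior (coneOf (u ∘ f))) := isOpen_interior.preimage hgcont
      obtain ⟨δ, hδ, hball⟩ := Metric.isOpen_iff.1 hU t0 hzint
      set t1 := min (t0 + δ / 2) ((t0 + 1) / 2) with ht1def
      have ht1gt : t0 < t1 := lt_min (by linarith) (by linarith)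
      have ht1mem : t1 ∈ T := by
        refine ⟨⟨by linarith, ?_⟩, ?_⟩
        · calc t1 ≤ (t0 + 1) / 2 := min_le_right _ _
            _ ≤ 1 := by linarith
        · refine show g t1 ∈ coneOf (u ∘ f) from interior_subset (hball ?_)
          rw [Metric.mem_ball, Real.dist_eq, abs_sub_lt_iff]
          constructor
          · have h2 := min_le_left (t0 + δ/2) ((t0+1)/2)
            have : t1 ≤ t0 + δ / 2 := h2
            linarith
          · linarith
      have : t1 ≤ t0 := le_csSup hTc.bddAbove ht1mem
      linarith
    set cz : Fin n → ℝ := fun i => (B.repr (g t0) i : ℝ) with hczdef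
    obtain ⟨j, hj⟩ : ∃ j, cz j = 0 := by
      by_contra hall
      push_neg at hall
      exact hznotint (hintγ _ fun i =>
        lt_of_le_of_ne ((hmemγ _).1 hzγ i) (Ne.symm (hall i)))
    have hzint : g t0 ∈ interior (coneOf u) := by
      have h1 : y ∈ interior (coneOf u) := interior_mono hγ hyint
      have he : g t0 = (1 - t0) • y + t0 • x := by
        simp only [hgdef]
        rw [smul_sub, sub_smul, one_smul]
        abel
      rw [he]
      exact (coneOf_convex u).combo_interior_closure_mem_interior h1 (subset_closure hxσ)
        (by linarith) ht00 (by ring)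
    have hzrep : g t0 = ∑ i ∈ Finset.univ.erase j, cz i • u (f i) := by
      have h1 : g t0 = ∑ i, cz i • u (f i) := by
        calc g t0 = ∑ i, (B.repr (g t0)) i • B i := (B.sum_repr _).symm
          _ = _ := Finset.sum_congr rfl fun i _ => by rw [hBi]
      rw [← sum_if_erase j (fun i => cz i • u (f i)), h1]
      refine Finset.sum_congr rfl fun i _ => ?_
      by_cases h : i = j
      · rw [if_pos h, h, hj, zero_smul]
      · rw [if_neg h]
    refine hq j ?_
    have := facet_interior hγ j cz (fun _ => 1)
      (fun i _ => (hmemγ _).1 hzγ i) (fun i _ => one_pos) (by rw [← hzrep]; exact hzint)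
    simpa using this
  obtain ⟨j, hjint⟩ := hqint
  refine ⟨j, ?_, ?_, hjint, ?_⟩
  · intro b hb
    exact facet_interior hγ j (fun _ => 1) b (fun _ _ => zero_le_one) hb (by simpa using hjint)
  · intro jj
    choose zz hzz using fun i : Fin n => (hprim (f i)).1 jj
    refine ⟨∑ i ∈ Finset.univ.erase j, zz i, ?_⟩
    rw [Finset.sum_apply]
    push_cast
    exact Finset.sum_congr rfl fun i _ => hzz i
  · have hmemp : (∑ i ∈ Finset.univ.erase j, u (f i)) ∈ coneOf (u ∘ f) := by
      refine ⟨fun i => if i = j then 0 else 1,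
        fun i => by dsimp only; split <;> norm_num, ?_⟩
      rw [show (∑ i, (if i = j then (0:ℝ) else 1) • (u ∘ f) i)
          = ∑ i, (if i = j then 0 else u (f i)) from
        Finset.sum_congr rfl fun i _ => by split <;> simp [Function.comp]]
      rw [sum_if_erase]
    rw [hL _ hmemp, map_sum]
    have h1 : ∀ i ∈ Finset.univ.erase j, L (u (f i)) = 1 := by
      intro i _
      have hm : u (f i) ∈ coneOf (u ∘ f) := by
        refine ⟨fun k => if k = i then 1 else 0,
          fun k => by dsimp only; split <;> norm_num, ?_⟩
        simp [ite_smul]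
      rw [← hL _ hm]
      exact lamMax_gen hpt hne hext (f i)
    rw [Finset.sum_congr rfl h1, Finset.sum_const, Finset.card_erase_of_mem (Finset.mem_univ j),
      Finset.card_univ, Fintype.card_fin, nsmul_eq_mul, mul_one, Nat.cast_sub hn, Nat.cast_one]
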